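/- Let A be a bialgebra over a commutative ring R, let x ∈ A be a grouplike element, let w_χ ∈ A* be a normalized two-sided x-semi-invariant integral, and let M be a left module over the convolution algebra A*. Define M^χ := {m ∈ M : f • m = f(x) • m for all f ∈ A*}. Then M^χ = w_χ • M, M^χ is an A*-submodule of M, and M is the internal direct sum of the A*-submodules w_χ • M and (ε − w_χ) • M. -/

import Mathlib

open TensorProduct

/-- The convolution product on the dual `A* = Hom_R(A, R)` of a bialgebra `A`:
`(f * g)(a) = Σ f(a₍₁₎) · g(a₍₂₎)`. -/
noncomputable def conv {R A : Type*} [CommRing R] [Ring A] [Bialgebra R A]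
    (f g : Module.Dual R A) : Module.Dual R A :=
  LinearMap.mul' R R ∘ₗ TensorProduct.map f g ∘ₗ Coalgebra.comul

/-- An element `x` of a bialgebra is grouplike if `Δ x = x ⊗ x` and `ε x = 1`. -/
def IsGroupLikeElem' (R : Type*) {A : Type*} [CommRing R] [Ring A] [Bialgebra R A]
    (x : A) : Prop :=
  Coalgebra.comul (R := R) x = x ⊗ₜ[R] x ∧ Coalgebra.counit (R := R) x = 1

/-- For `x` grouplike, a normalized two-sided `x`-semi-invariant integral on `A` is
`w ∈ A*` with `f * w = w * f = f(x) • w` for all `f ∈ A*` and `w(x) = 1`. -/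
def IsNormalizedSemiInvIntegral {R A : Type*} [CommRing R] [Ring A] [Bialgebra R A]
    (x : A) (w : Module.Dual R A) : Prop :=
  (∀ f : Module.Dual R A, conv f w = f x • w) ∧
  (∀ f : Module.Dual R A, conv w f = f x • w) ∧
  w x = 1

/-- A structure of left module over the convolution algebra `A*` on an `R`-module `M`:
an `R`-bilinear action of `A*` on `M` which is unital (the counit `ε` is the unit of the
convolution algebra) and associative for the convolution product. -/
structure ConvModuleStruct (R A M : Type*) [CommRing R] [Ring A] [Bialgebra R A]
    [AddCommGroup M] [Module R M] where
  smul : Module.Dual R A →ₗ[R] M →ₗ[R] M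
  counit_smul : ∀ m : M, smul Coalgebra.counit m = m
  conv_smul : ∀ (f g : Module.Dual R A) (m : M),
    smul (conv f g) m = smul f (smul g m)

/-- The `χ`-semi-invariants `M^χ` of a module `M` over the convolution algebra `A*`,
for `χ` the evaluation at a grouplike element `x`:
those `m` with `f • m = f(x) • m` for all `f ∈ A*`. -/
def ConvModuleStruct.semiInv {R A M : Type*} [CommRing R] [Ring A] [Bialgebra R A]
    [AddCommGroup M] [Module R M] (μ : ConvModuleStruct R A M) (x : A) : Set M :=
  {m : M | ∀ f : Module.Dual R A, μ.smul f m = f x • m}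

theorem semiinvariants_eq_and_direct_sum {R A M : Type*} [CommRing R] [Ring A]
    [Bialgebra R A] [AddCommGroup M] [Module R M] (μ : ConvModuleStruct R A M)
    (x : A) (hx : IsGroupLikeElem' R x)
    (wχ : Module.Dual R A) (hwχ : IsNormalizedSemiInvIntegral x wχ) :
    -- `M^χ = wχ • M`
    (μ.semiInv x = Set.range (μ.smul wχ)) ∧
    -- `M^χ` is an `A*`-submodule of `M`
    ((0 : M) ∈ μ.semiInv x ∧
      (∀ m m' : M, m ∈ μ.semiInv x → m' ∈ μ.semiInv x → m + m' ∈ μ.semiInv x) ∧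
      (∀ (r : R) (m : M), m ∈ μ.semiInv x → r • m ∈ μ.semiInv x) ∧
      (∀ (f : Module.Dual R A) (m : M), m ∈ μ.semiInv x → μ.smul f m ∈ μ.semiInv x)) ∧
    -- `wχ • M` and `(ε - wχ) • M` are `A*`-submodules
    (∀ (f : Module.Dual R A) (m : M), m ∈ Set.range (μ.smul wχ) →
      μ.smul f m ∈ Set.range (μ.smul wχ)) ∧
    (∀ (f : Module.Dual R A) (m : M), m ∈ Set.range (μ.smul (Coalgebra.counit - wχ)) →
      μ.smul f m ∈ Set.range (μ.smul (Coalgebra.counit - wχ))) ∧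
    -- `M` is the internal direct sum of `wχ • M` and `(ε - wχ) • M`
    (∀ m : M, m = μ.smul wχ m + μ.smul (Coalgebra.counit - wχ) m) ∧
    (∀ (m m₁ m₂ : M), m₁ ∈ Set.range (μ.smul wχ) →
      m₂ ∈ Set.range (μ.smul (Coalgebra.counit - wχ)) → m = m₁ + m₂ →
      m₁ = μ.smul wχ m ∧ m₂ = μ.smul (Coalgebra.counit - wχ) m) := by
  obtain ⟨hx1, hx2⟩ := hx
  obtain ⟨hw1, hw2, hw3⟩ := hwχ
  have hconvx : ∀ f g : Module.Dual R A, conv f g x = f x * g x := by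
    intro f g; simp [conv, hx1]
  have hidem : ∀ m : M, μ.smul wχ (μ.smul wχ m) = μ.smul wχ m := by
    intro m
    rw [← μ.conv_smul, hw1, hw3, one_smul]
  have hsub : ∀ m : M, μ.smul (Coalgebra.counit - wχ) m = m - μ.smul wχ m := by
    intro m; rw [map_sub, LinearMap.sub_apply, μ.counit_smul]
  have hker : ∀ m : M,
      m ∈ Set.range (μ.smul (Coalgebra.counit - wχ)) ↔ μ.smul wχ m = 0 := by
    intro m
    constructor
    · rintro ⟨m', rfl⟩
      rw [hsub, map_sub, hidem, sub_self]
    · intro h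
      exact ⟨m, by rw [hsub, h, sub_zero]⟩
  refine ⟨?_, ⟨?_, ?_, ?_, ?_⟩, ?_, ?_, ?_, ?_⟩
  · ext m
    constructor
    · intro hm
      exact ⟨m, by rw [hm wχ, hw3, one_smul]⟩
    · rintro ⟨m', rfl⟩ f
      rw [← μ.conv_smul, hw1 f, map_smul, LinearMap.smul_apply]
  · intro f; simp [ConvModuleStruct.semiInv]
  · intro m m' hm hm' f
    rw [map_add, hm f, hm' f, smul_add]
  · intro r m hm f
    rw [map_smul, hm f, smul_comm]
  · intro f m hm g
    rw [← μ.conv_smul, hm (conv g f), hconvx, mul_smul, ← hm f]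
  · rintro f m ⟨m', rfl⟩
    exact ⟨f x • m', by
      rw [map_smul, ← μ.conv_smul, hw1, map_smul, LinearMap.smul_apply]⟩
  · intro f m hm
    rw [hker] at hm ⊢
    rw [← μ.conv_smul, hw2 f, map_smul, LinearMap.smul_apply, hm, smul_zero]
  · intro m; rw [hsub]; abel
  · rintro m m₁ m₂ ⟨a, rfl⟩ hm₂ rfl
    rw [hker] at hm₂
    have h1 : μ.smul wχ (μ.smul wχ a + m₂) = μ.smul wχ a := by
      rw [map_add, hidem, hm₂, add_zero]
    refine ⟨h1.symm, ?_⟩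
    rw [hsub, h1]; abel
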